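/- Let u¹,…,uⁿ be basic invariants of a finite Coxeter group W acting on ℝⁿ (or ℂⁿ) with degrees d₁ < d₂ ≤ … ≤ d_n, and let gⁱʲ(u) be the Euclidean contravariant metric expressed in the coordinates u. Then gⁱʲ is a polynomial in u¹,…,uⁿ that depends at most linearly on the highest-degree invariant uⁿ, so that ηⁱʲ := ∂gⁱʲ/∂uⁿ = (Lie_e g)ⁱʲ, with e = ∂/∂uⁿ, is independent of uⁿ. -/

import Mathlib

open scoped BigOperators

open MvPolynomial

/-- Partial derivative of a homogeneous polynomial is homogeneous of degree one less. -/
lemma aux_pderiv_isHomogeneous {σ : Type*} [DecidableEq σ] {R : Type*} [CommRing R]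
    {φ : MvPolynomial σ R} {m : ℕ} (h : φ.IsHomogeneous m) (k : σ) :
    (MvPolynomial.pderiv k φ).IsHomogeneous (m - 1) := by
  classical
  rw [← support_sum_monomial_coeff φ, map_sum]
  apply IsHomogeneous.sum
  intro s hs
  rw [pderiv_monomial]
  by_cases h0 : s k = 0
  · rw [h0]; simp [MvPolynomial.isHomogeneous_zero]
  · apply isHomogeneous_monomial
    have hds : (Finsupp.weight 1) s = m := h (MvPolynomial.mem_support_iff.mp hs)
    have hsplit : s - Finsupp.single k 1 + Finsupp.single k 1 = s := by
      ext a
      simp only [Finsupp.coe_add, Finsupp.coe_tsub, Pi.add_apply, Pi.sub_apply,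
        Finsupp.single_apply]
      rcases eq_or_ne k a with hka | hka
      · subst hka
        split_ifs with h'
        · omega
        · exact absurd rfl h'
      · simp [hka]
    have hw := congrArg (Finsupp.weight (1 : σ → ℕ)) hsplit
    rw [map_add, hds] at hw
    have h1 : (Finsupp.weight (1 : σ → ℕ)) (Finsupp.single k 1) = 1 := by
      simp [Finsupp.weight_apply, Finsupp.sum_single_index]
    rw [Finsupp.degree_eq_weight_one]
    have e : (Finsupp.weight (1 : σ → ℕ)) = Finsupp.weight (R := ℕ) (fun (_ : σ) => (1 : ℕ)) := rfl
    rw [e] at hw h1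
    omega

theorem coxeter_euclidean_metric_linear_in_top_invariant (n : ℕ)
    (W : Finset (Matrix (Fin n) (Fin n) ℝ))
    -- W consists of orthogonal transformations
    (hortho : ∀ A ∈ W, A * A.transpose = 1)
    (u : Fin n → MvPolynomial (Fin n) ℝ)
    -- the uⁱ are W-invariant polynomials
    (hinv : ∀ A ∈ W, ∀ i, MvPolynomial.aeval
        (fun j => ∑ k, MvPolynomial.C (A j k) * MvPolynomial.X k) (u i) = u i)
    -- the uⁱ are algebraically independent (basic invariants)
    (halg : AlgebraicIndependent ℝ u)
    (d : Fin n → ℕ)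
    (hhom : ∀ i, (u i).IsHomogeneous (d i))
    (hd2 : ∀ i, 2 ≤ d i)
    (iN : Fin n)
    -- uⁿ := u iN is the invariant of highest degree
    (htop : ∀ i, d i ≤ d iN)
    (P : Fin n → Fin n → MvPolynomial (Fin n) ℝ)
    -- P i j expresses gⁱʲ as a polynomial in the invariants:
    -- gⁱʲ = Σ_k (∂uⁱ/∂p^k)(∂uʲ/∂p^k) = P i j (u¹,…,uⁿ)
    (hP : ∀ i j, MvPolynomial.aeval u (P i j)
        = ∑ k, (MvPolynomial.pderiv k (u i)) * (MvPolynomial.pderiv k (u j))) :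
    ∀ i j,
      (P i j).degreeOf iN ≤ 1 ∧
      (MvPolynomial.pderiv iN (P i j)).degreeOf iN = 0 := by
  classical
  intro i j
  set q : MvPolynomial (Fin n) ℝ := P i j with hq
  set D : ℕ := d i + d j - 2 with hD
  -- the right-hand side is homogeneous of degree D
  have hRHS : (∑ k, (MvPolynomial.pderiv k (u i)) * (MvPolynomial.pderiv k (u j))).IsHomogeneous D := by
    apply IsHomogeneous.sum
    intro k _
    have h := (aux_pderiv_isHomogeneous (hhom i) k).mul (aux_pderiv_isHomogeneous (hhom j) k)
    have harith : d i - 1 + (d j - 1) = D := by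
      have := hd2 i; have := hd2 j; omega
    rwa [harith] at h
  -- evaluation of a monomial in the invariants is homogeneous of the weighted degree
  have hmono : ∀ (α : Fin n →₀ ℕ) (c : ℝ),
      (MvPolynomial.aeval u (MvPolynomial.monomial α c)).IsHomogeneous (Finsupp.weight d α) := by
    intro α c
    rw [MvPolynomial.aeval_monomial]
    have hprod : (Finsupp.prod α fun k e => u k ^ e).IsHomogeneous
        (∑ k ∈ α.support, d k * α k) := by
      apply IsHomogeneous.prod
      intro k _
      exact (hhom k).pow (α k)
    have hwt : Finsupp.weight d α = ∑ k ∈ α.support, d k * α k := by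
      rw [Finsupp.weight_apply, Finsupp.sum]
      exact Finset.sum_congr rfl fun k _ => by rw [smul_eq_mul, mul_comm]
    rw [hwt]
    exact hprod.C_mul c
  -- evaluation commutes with taking (weighted) homogeneous components
  have key : ∀ N : ℕ,
      MvPolynomial.aeval u ((MvPolynomial.weightedHomogeneousComponent d N) q)
        = (MvPolynomial.homogeneousComponent N) (MvPolynomial.aeval u q) := by
    intro N
    conv_rhs => rw [← MvPolynomial.support_sum_monomial_coeff q]
    rw [map_sum, map_sum, MvPolynomial.weightedHomogeneousComponent_apply, map_sum,
      Finset.sum_filter]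
    apply Finset.sum_congr rfl
    intro s _
    rw [MvPolynomial.homogeneousComponent_of_mem
      ((MvPolynomial.mem_homogeneousSubmodule _ _).2 (hmono s (MvPolynomial.coeff s q)))]
    by_cases hsw : Finsupp.weight d s = N
    · rw [if_pos hsw, if_pos hsw.symm]
    · rw [if_neg hsw, if_neg (Ne.symm hsw)]
  -- all weighted homogeneous components of q of weight ≠ D vanish
  have hcomp : ∀ N : ℕ, N ≠ D → (MvPolynomial.weightedHomogeneousComponent d N) q = 0 := by
    intro N hN
    have h0 : MvPolynomial.aeval u ((MvPolynomial.weightedHomogeneousComponent d N) q) = 0 := by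
      rw [key N, hP i j, MvPolynomial.homogeneousComponent_of_mem
        ((MvPolynomial.mem_homogeneousSubmodule _ _).2 hRHS), if_neg hN]
    have := halg (show MvPolynomial.aeval u ((MvPolynomial.weightedHomogeneousComponent d N) q)
        = MvPolynomial.aeval u 0 by rw [h0, map_zero])
    exact this
  -- every monomial of q has weighted degree D
  have hweight : ∀ α ∈ q.support, Finsupp.weight d α = D := by
    intro α hα
    by_contra hne
    have h0 := hcomp (Finsupp.weight d α) hne
    have hc : MvPolynomial.coeff α ((MvPolynomial.weightedHomogeneousComponent d
        (Finsupp.weight d α)) q) = MvPolynomial.coeff α q := by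
      rw [MvPolynomial.coeff_weightedHomogeneousComponent, if_pos rfl]
    rw [h0] at hc
    exact (MvPolynomial.mem_support_iff.mp hα) hc.symm
  -- hence the exponent of the top invariant is at most 1 in every monomial
  have hle1 : ∀ α ∈ q.support, α iN ≤ 1 := by
    intro α hα
    have hw : α iN * d iN ≤ Finsupp.weight d α := by
      rw [Finsupp.weight_apply, Finsupp.sum]
      by_cases hmem : iN ∈ α.support
      · have := Finset.single_le_sum (f := fun k => α k • d k)
          (fun k _ => Nat.zero_le _) hmem
        simpa [smul_eq_mul] using this
      · have : α iN = 0 := Finsupp.notMem_support_iff.mp hmem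
        simp [this]
    rw [hweight α hα] at hw
    have hDle : D ≤ 2 * d iN - 2 := by
      have := htop i; have := htop j; have := hd2 iN; omega
    by_contra hgt
    push_neg at hgt
    have h2 : 2 * d iN ≤ α iN * d iN := Nat.mul_le_mul_right _ hgt
    have := hd2 iN
    omega
  constructor
  · exact MvPolynomial.degreeOf_le_iff.mpr hle1
  · have hle0 : ∀ m ∈ (MvPolynomial.pderiv iN q).support, m iN ≤ 0 := by
      intro m hm
      have hp : MvPolynomial.pderiv iN q = ∑ s ∈ q.support,
          MvPolynomial.monomial (s - Finsupp.single iN 1) (MvPolynomial.coeff s q * s iN) := by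
        conv_lhs => rw [← MvPolynomial.support_sum_monomial_coeff q]
        rw [map_sum]
        exact Finset.sum_congr rfl fun s _ => MvPolynomial.pderiv_monomial
      rw [hp] at hm
      obtain ⟨s, hs, hm2⟩ := Finset.mem_biUnion.mp (MvPolynomial.support_sum hm)
      have hm3 : m = s - Finsupp.single iN 1 :=
        Finset.mem_singleton.mp (MvPolynomial.support_monomial_subset hm2)
      have hs1 : s iN ≤ 1 := hle1 s hs
      rw [hm3, Finsupp.tsub_apply, Finsupp.single_eq_same]
      omega
    exact Nat.eq_zero_of_le_zero (MvPolynomial.degreeOf_le_iff.mpr hle0)
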